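/- Let 0 < r < 1, s ≥ 1, 1 ≤ p, δ ∈ (0,1), n ≥ 2, and let P = {(x₁, x') ∈ ℝ × ℝ^{n−1} : 0 < x₁ < r, |x'| < r^s} be a cylindrical stem. Let u be the linear function u(x) = x₁/r on P. Then ∫_P ∫_{P ∩ B(x, τ d(x,∂P))} |u(x) − u(y)|^p / |x−y|^{n+pδ} dy dx ≤ C r^{s(n−pδ)+(s−1)(p−1)}, where C depends only on n, p, δ, τ and d(x,∂P) is the distance of x to the boundary of P. -/

import Mathlib

open Metric MeasureTheory ENNReal


lemma ball_rpow_bound (d : ℕ) (hd : 2 ≤ d) {α : ℝ} (hα : 0 < α) :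
    ∃ c : ℝ, 0 < c ∧ ∀ (x : EuclideanSpace ℝ (Fin d)) (R : ℝ), 0 ≤ R →
      ∫⁻ y in ball x R, ENNReal.ofReal (dist x y ^ (α - d)) ≤ ENNReal.ofReal (c * R ^ α) := by
  have hdpos : 0 < d := by omega
  haveI : Nonempty (Fin d) := ⟨⟨0, hdpos⟩⟩
  haveI : Nontrivial (EuclideanSpace ℝ (Fin d)) := by
    refine ⟨⟨EuclideanSpace.single ⟨0, hdpos⟩ 1, 0, fun h => (one_ne_zero (α := ℝ)) ?_⟩⟩
    have := congrFun (congrArg (fun z : EuclideanSpace ℝ (Fin d) => (z : Fin d → ℝ)) h) ⟨0, hdpos⟩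
    simpa using this
  set e : ℝ := α - d with he
  set V : ℝ≥0∞ := volume (ball (0 : EuclideanSpace ℝ (Fin d)) 1) with hV
  have hVlt : V < ⊤ := measure_ball_lt_top
  set q : ℝ≥0∞ := ENNReal.ofReal ((2:ℝ) ^ (-α)) with hq
  have hq1 : q < 1 := by
    rw [hq]
    have : (2:ℝ) ^ (-α) < 1 :=
      Real.rpow_lt_one_of_one_lt_of_neg one_lt_two (by linarith)
    exact ENNReal.ofReal_lt_one.2 this
  have hSne : (1 - q)⁻¹ ≠ ⊤ := by
    rw [Ne, ENNReal.inv_eq_top, tsub_eq_zero_iff_le]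
    exact fun h => absurd (lt_of_lt_of_le hq1 h) (lt_irrefl _)
  set c₂ : ℝ := (2:ℝ) ^ (-e) + 1 with hc₂
  have hc₂pos : 0 < c₂ := by positivity
  refine ⟨c₂ * V.toReal * ((1 - q)⁻¹).toReal + 1, by positivity, fun x R hR => ?_⟩
  rcases eq_or_lt_of_le hR with hR0 | hRpos
  · rw [← hR0]
    simp [Real.zero_rpow (ne_of_gt hα)]
  -- annuli
  set ρ : ℕ → ℝ := fun k => R * (2:ℝ) ^ (-(k:ℝ)) with hρ
  have hρpos : ∀ k, 0 < ρ k := fun k => by positivity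
  have hρsucc : ∀ k, ρ (k+1) = ρ k * (2:ℝ) ^ (-(1:ℝ)) := by
    intro k
    simp only [hρ]
    rw [Nat.cast_add, Nat.cast_one, neg_add, Real.rpow_add two_pos, mul_assoc]
  have h21 : (0:ℝ) < (2:ℝ)^(-(1:ℝ)) := by positivity
  have h21' : (2:ℝ)^(-(1:ℝ)) ≤ 1 :=
    Real.rpow_le_one_of_one_le_of_nonpos one_le_two (by norm_num)
  have hmono : ∀ k, ρ (k+1) ≤ ρ k := by
    intro k
    rw [hρsucc]
    nlinarith [(hρpos k).le]
  set A : ℕ → Set (EuclideanSpace ℝ (Fin d)) :=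
    fun k => ball x (ρ k) \ ball x (ρ (k+1)) with hA
  have hcover : ball x R \ {x} ⊆ ⋃ k, A k := by
    intro y hy
    have hyx : y ≠ x := by simpa using hy.2
    have ht : 0 < dist y x := dist_pos.2 hyx
    have hlt : dist y x < R := mem_ball.1 hy.1
    have hex : ∃ k : ℕ, ρ (k+1) ≤ dist y x := by
      obtain ⟨m, hm⟩ := pow_unbounded_of_one_lt (R / dist y x) (one_lt_two (α := ℝ))
      have hpow : (0:ℝ) < 2 ^ m := by positivity
      have hrw : ρ m = R / 2 ^ m := by
        show R * (2:ℝ)^(-(m:ℝ)) = _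
        rw [Real.rpow_neg (by norm_num), Real.rpow_natCast, div_eq_mul_inv]
      have hρm : ρ m ≤ dist y x := by
        rw [hrw, div_le_iff₀ hpow]
        rw [div_lt_iff₀ ht] at hm
        nlinarith
      exact ⟨m, (hmono m).trans hρm⟩
    classical
    have hk1 : ρ (Nat.find hex + 1) ≤ dist y x := Nat.find_spec hex
    have hk2 : dist y x < ρ (Nat.find hex) := by
      rcases Nat.eq_zero_or_pos (Nat.find hex) with h0 | hpos
      · rw [h0]
        show dist y x < R * (2:ℝ)^(-(0:ℕ):ℝ)
        simpa using hlt
      · obtain ⟨j, hj⟩ := Nat.exists_eq_succ_of_ne_zero (Nat.pos_iff_ne_zero.1 hpos)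
        have hmin := Nat.find_min hex (m := j) (by omega)
        rw [hj]
        exact lt_of_not_ge hmin
    exact Set.mem_iUnion.2 ⟨Nat.find hex,
      ⟨mem_ball.2 hk2, fun h => absurd (mem_ball.1 h) (not_lt.2 hk1)⟩⟩
  -- per-annulus bound
  have hannulus : ∀ k, ∫⁻ y in A k, ENNReal.ofReal (dist x y ^ e) ≤
      ENNReal.ofReal (c₂ * R ^ α) * V * q ^ k := by
    intro k
    have hpt : ∀ y ∈ A k, ENNReal.ofReal (dist x y ^ e) ≤
        ENNReal.ofReal ((ρ (k+1)) ^ e + (ρ k) ^ e) := by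
      intro y hy
      have h1 : dist x y < ρ k := by rw [dist_comm]; exact mem_ball.1 hy.1
      have h2 : ρ (k+1) ≤ dist x y := by
        rw [dist_comm]
        exact not_lt.1 fun h => hy.2 (mem_ball.2 h)
      apply ENNReal.ofReal_le_ofReal
      rcases le_or_gt 0 e with hsgn | hsgn
      · have : dist x y ^ e ≤ (ρ k) ^ e :=
          Real.rpow_le_rpow dist_nonneg h1.le hsgn
        nlinarith [Real.rpow_nonneg (hρpos (k+1)).le e]
      · have : dist x y ^ e ≤ (ρ (k+1)) ^ e :=
          Real.rpow_le_rpow_of_nonpos (hρpos (k+1)) h2 hsgn.le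
        nlinarith [Real.rpow_nonneg (hρpos k).le e]
    calc ∫⁻ y in A k, ENNReal.ofReal (dist x y ^ e)
        ≤ ∫⁻ _ in A k, ENNReal.ofReal ((ρ (k+1)) ^ e + (ρ k) ^ e) :=
          setLIntegral_mono measurable_const hpt
      _ = ENNReal.ofReal ((ρ (k+1)) ^ e + (ρ k) ^ e) * volume (A k) :=
          setLIntegral_const _ _
      _ ≤ ENNReal.ofReal ((ρ (k+1)) ^ e + (ρ k) ^ e) * volume (ball x (ρ k)) := by
          gcongr
          exact Set.diff_subset
      _ = ENNReal.ofReal ((ρ (k+1)) ^ e + (ρ k) ^ e) *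
            (ENNReal.ofReal ((ρ k) ^ d) * V) := by
          rw [Measure.addHaar_ball volume x (hρpos k).le, finrank_euclideanSpace_fin]
      _ = ENNReal.ofReal (((ρ (k+1)) ^ e + (ρ k) ^ e) * (ρ k) ^ d) * V := by
          rw [← mul_assoc, ← ENNReal.ofReal_mul (by positivity)]
      _ = ENNReal.ofReal (c₂ * R ^ α * ((2:ℝ) ^ (-α)) ^ k) * V := by
          congr 2
          have h1 : (ρ (k+1)) ^ e = (ρ k) ^ e * ((2:ℝ) ^ (-(1:ℝ))) ^ e := by
            rw [hρsucc, Real.mul_rpow (hρpos k).le h21.le]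
          have h2 : ((2:ℝ) ^ (-(1:ℝ))) ^ e = (2:ℝ) ^ (-e) := by
            rw [← Real.rpow_mul (by norm_num)]
            norm_num
          have h3 : (ρ k : ℝ) ^ (d : ℕ) = (ρ k) ^ ((d : ℕ) : ℝ) := by
            rw [Real.rpow_natCast]
          have h4 : (ρ k) ^ e * (ρ k) ^ ((d:ℕ):ℝ) = (ρ k) ^ α := by
            rw [← Real.rpow_add (hρpos k)]
            congr 1
            rw [he]
            push_cast
            ring
          have h5 : (ρ k) ^ α = R ^ α * ((2:ℝ) ^ (-α)) ^ k := by
            show (R * (2:ℝ)^(-(k:ℝ))) ^ α = _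
            rw [Real.mul_rpow hRpos.le (by positivity),
              ← Real.rpow_natCast ((2:ℝ) ^ (-α)) k, ← Real.rpow_mul (by norm_num),
              ← Real.rpow_mul (by norm_num)]
            congr 2
            ring
          calc ((ρ (k+1)) ^ e + (ρ k) ^ e) * (ρ k) ^ (d:ℕ)
              = ((ρ k) ^ e * ((2:ℝ)^(-e)) + (ρ k) ^ e) * ((ρ k) ^ ((d:ℕ):ℝ)) := by
                rw [h1, h2, h3]
            _ = c₂ * ((ρ k) ^ e * (ρ k) ^ ((d:ℕ):ℝ)) := by rw [hc₂]; ring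
            _ = c₂ * (R ^ α * ((2:ℝ) ^ (-α)) ^ k) := by rw [h4, h5]
            _ = c₂ * R ^ α * ((2:ℝ) ^ (-α)) ^ k := by ring
      _ = ENNReal.ofReal (c₂ * R ^ α) * V * q ^ k := by
          rw [ENNReal.ofReal_mul (by positivity), ENNReal.ofReal_pow (by positivity), hq]
          ring
  -- sum up
  calc ∫⁻ y in ball x R, ENNReal.ofReal (dist x y ^ e)
      ≤ ∫⁻ y in (ball x R \ {x}) ∪ {x}, ENNReal.ofReal (dist x y ^ e) := by
        apply lintegral_mono_set
        intro y hy
        by_cases h : y = x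
        · exact Set.mem_union_right _ (by simp [h])
        · exact Set.mem_union_left _ ⟨hy, h⟩
    _ ≤ (∫⁻ y in ball x R \ {x}, ENNReal.ofReal (dist x y ^ e)) +
          ∫⁻ y in ({x} : Set _), ENNReal.ofReal (dist x y ^ e) :=
        lintegral_union_le _ _ _
    _ ≤ (∫⁻ y in ⋃ k, A k, ENNReal.ofReal (dist x y ^ e)) + 0 := by
        gcongr
        · exact le_of_eq (setLIntegral_measure_zero _ _ (measure_singleton x))
    _ ≤ (∑' k, ∫⁻ y in A k, ENNReal.ofReal (dist x y ^ e)) + 0 := by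
        gcongr
        exact lintegral_iUnion_le _ _
    _ ≤ (∑' k : ℕ, ENNReal.ofReal (c₂ * R ^ α) * V * q ^ k) + 0 := by
        gcongr with k
        exact hannulus k
    _ = ENNReal.ofReal (c₂ * R ^ α) * V * (1 - q)⁻¹ := by
        rw [add_zero, ENNReal.tsum_mul_left, ENNReal.tsum_geometric q]
    _ = ENNReal.ofReal (c₂ * R ^ α * V.toReal * ((1 - q)⁻¹).toReal) := by
        rw [ENNReal.ofReal_mul (by positivity : (0:ℝ) ≤ c₂ * R ^ α * V.toReal),
          ENNReal.ofReal_mul (by positivity : (0:ℝ) ≤ c₂ * R ^ α),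
          ENNReal.ofReal_toReal hVlt.ne, ENNReal.ofReal_toReal hSne]
    _ ≤ ENNReal.ofReal ((c₂ * V.toReal * ((1 - q)⁻¹).toReal + 1) * R ^ α) := by
        apply ENNReal.ofReal_le_ofReal
        have hRα : 0 ≤ R ^ α := Real.rpow_nonneg hRpos.le α
        nlinarith [ENNReal.toReal_nonneg (a := V), ENNReal.toReal_nonneg (a := (1-q)⁻¹)]


/-- The cylindrical stem `P = {(x₁,x') : 0 < x₁ < r, |x'| < r^s}` in `ℝ^{n+2}`. -/
noncomputable def stem (n : ℕ) (r s : ℝ) : Set (EuclideanSpace ℝ (Fin (n + 2))) :=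
  {x | 0 < x 0 ∧ x 0 < r ∧ ∑ i ∈ Finset.univ.erase 0, (x i) ^ 2 < (r ^ s) ^ 2}

lemma stem_eq (n : ℕ) (r s : ℝ) : stem n r s =
    {x : EuclideanSpace ℝ (Fin (n+2)) | 0 < x 0} ∩
    ({x | x 0 < r} ∩ {x | ∑ i ∈ Finset.univ.erase 0, (x i) ^ 2 < (r ^ s) ^ 2}) := rfl

lemma isOpen_stem (n : ℕ) (r s : ℝ) : IsOpen (stem n r s) := by
  have hc : ∀ i : Fin (n+2), Continuous fun x : EuclideanSpace ℝ (Fin (n+2)) => x i :=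
    fun i => (EuclideanSpace.proj (𝕜 := ℝ) i).continuous
  have hsum : Continuous fun x : EuclideanSpace ℝ (Fin (n+2)) =>
      ∑ i ∈ Finset.univ.erase 0, (x i) ^ 2 :=
    continuous_finset_sum _ fun i _ => (hc i).pow 2
  rw [stem_eq]
  exact (isOpen_lt continuous_const (hc 0)).inter
    ((isOpen_lt (hc 0) continuous_const).inter (isOpen_lt hsum continuous_const))

-- |x i - y i| ≤ dist x y in EuclideanSpace
lemma abs_coord_le_dist {m : ℕ} (x y : EuclideanSpace ℝ (Fin m)) (i : Fin m) :
    |x i - y i| ≤ dist x y := by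
  rw [EuclideanSpace.dist_eq]
  have h1 : |x i - y i| = Real.sqrt (dist (x i) (y i) ^ 2) := by
    rw [Real.dist_eq, Real.sqrt_sq_eq_abs, abs_abs]
  rw [h1]
  apply Real.sqrt_le_sqrt
  exact Finset.single_le_sum (f := fun j => dist (x j) (y j) ^ 2)
    (fun j _ => sq_nonneg (dist (x j) (y j))) (Finset.mem_univ i)

lemma infDist_frontier_stem_le {n : ℕ} {r s : ℝ} (hr : 0 < r)
    {x : EuclideanSpace ℝ (Fin (n+2))} (hx : x ∈ stem n r s) :
    infDist x (frontier (stem n r s)) ≤ 2 * r ^ s := by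
  obtain ⟨hx0, hxr, hxs⟩ := hx
  have hrs : 0 < r ^ s := Real.rpow_pos_of_pos hr s
  have h01 : (0 : Fin (n+2)) ≠ 1 := by
    intro h
    simpa using congrArg Fin.val h
  have h1mem : (1 : Fin (n+2)) ∈ Finset.univ.erase (0 : Fin (n+2)) :=
    Finset.mem_erase.2 ⟨Ne.symm h01, Finset.mem_univ _⟩
  set T : ℝ := ∑ i ∈ (Finset.univ.erase (0 : Fin (n+2))).erase 1, (x i) ^ 2 with hT
  have hTnonneg : 0 ≤ T := Finset.sum_nonneg fun i _ => sq_nonneg _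
  have hsplit : ((x 1 : ℝ)) ^ 2 + T = ∑ i ∈ Finset.univ.erase (0 : Fin (n+2)), (x i) ^ 2 :=
    Finset.add_sum_erase _ (fun i => ((x i : ℝ)) ^ 2) h1mem
  have hTle : T ≤ (r ^ s) ^ 2 := by nlinarith [sq_nonneg (x 1)]
  set b : ℝ := Real.sqrt ((r ^ s) ^ 2 - T) with hb
  have hbnonneg : 0 ≤ b := Real.sqrt_nonneg _
  have hble : b ≤ r ^ s := by
    rw [hb]
    calc Real.sqrt ((r ^ s) ^ 2 - T) ≤ Real.sqrt ((r ^ s) ^ 2) :=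
          Real.sqrt_le_sqrt (by linarith)
      _ = r ^ s := Real.sqrt_sq hrs.le
  have hbsq : b ^ 2 = (r ^ s) ^ 2 - T := Real.sq_sqrt (by linarith)
  have hx1 : |x 1| ≤ r ^ s := by
    have : (x 1) ^ 2 ≤ (r ^ s) ^ 2 := by nlinarith
    calc |x 1| = Real.sqrt ((x 1) ^ 2) := (Real.sqrt_sq_eq_abs _).symm
      _ ≤ Real.sqrt ((r ^ s) ^ 2) := Real.sqrt_le_sqrt this
      _ = r ^ s := Real.sqrt_sq hrs.le
  set z : EuclideanSpace ℝ (Fin (n+2)) := x + EuclideanSpace.single 1 (b - x 1) with hz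
  have hzapp : ∀ j, z j = if j = 1 then b else x j := by
    intro j
    rw [hz]
    by_cases hj : j = 1
    · subst hj
      simp [PiLp.add_apply, EuclideanSpace.single_apply]
    · simp [PiLp.add_apply, EuclideanSpace.single_apply, hj]
  have hz0 : z 0 = x 0 := by rw [hzapp 0, if_neg h01]
  have hz1 : z 1 = b := by rw [hzapp 1, if_pos rfl]
  have hzsum : ∑ i ∈ Finset.univ.erase (0 : Fin (n+2)), (z i) ^ 2 = (r ^ s) ^ 2 := by
    have hcongr : ∀ i ∈ Finset.univ.erase (0 : Fin (n+2)),
        (z i : ℝ) ^ 2 = (x i) ^ 2 + (if i = 1 then b ^ 2 - (x 1) ^ 2 else 0) := by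
      intro i _
      by_cases hi : i = 1
      · subst hi
        rw [hz1, if_pos rfl]
        ring
      · rw [hzapp i, if_neg hi, if_neg hi]
        ring
    rw [Finset.sum_congr rfl hcongr, Finset.sum_add_distrib,
      Finset.sum_ite_eq' (Finset.univ.erase (0 : Fin (n+2))) 1
        (fun _ => b ^ 2 - (x 1) ^ 2), if_pos h1mem]
    linarith [hsplit, hbsq]
  -- z ∈ frontier
  have hzfront : z ∈ frontier (stem n r s) := by
    rw [frontier, (isOpen_stem n r s).interior_eq]
    constructor
    · -- closure: approximate by scaling transverse coordinates
      set w : EuclideanSpace ℝ (Fin (n+2)) := z - EuclideanSpace.single 0 (x 0) with hw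
      have hφ : ∀ c : ℝ, ∀ j, (EuclideanSpace.single (0 : Fin (n+2)) (x 0) + c • w) j
          = if j = 0 then x 0 else c * z j := by
        intro c j
        by_cases hj : j = 0
        · subst hj
          simp [hw, PiLp.add_apply, PiLp.smul_apply, PiLp.sub_apply,
            EuclideanSpace.single_apply, hz0]
        · simp [hw, PiLp.add_apply, PiLp.smul_apply, PiLp.sub_apply,
            EuclideanSpace.single_apply, hj]
      have htend : Filter.Tendsto (fun c : ℝ => EuclideanSpace.single (0 : Fin (n+2)) (x 0) + c • w)
          (nhdsWithin 1 (Set.Iio 1)) (nhds z) := by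
        have hcont : Continuous fun c : ℝ => EuclideanSpace.single (0 : Fin (n+2)) (x 0) + c • w :=
          continuous_const.add (continuous_id.smul continuous_const)
        have h1 : EuclideanSpace.single (0 : Fin (n+2)) (x 0) + (1:ℝ) • w = z := by
          rw [hw]; simp
        have := hcont.tendsto 1
        rw [h1] at this
        exact this.mono_left nhdsWithin_le_nhds
      refine mem_closure_of_tendsto htend ?_
      have hIoo : Set.Ioo (0:ℝ) 1 ∈ nhdsWithin (1:ℝ) (Set.Iio 1) :=
        Ioo_mem_nhdsLT_of_mem (by constructor <;> norm_num)
      filter_upwards [hIoo] with c hc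
      refine ⟨?_, ?_, ?_⟩
      · rw [hφ c 0, if_pos rfl]; exact hx0
      · rw [hφ c 0, if_pos rfl]; exact hxr
      · have : ∑ i ∈ Finset.univ.erase (0 : Fin (n+2)),
            ((EuclideanSpace.single (0 : Fin (n+2)) (x 0) + c • w) i) ^ 2
            = c ^ 2 * ∑ i ∈ Finset.univ.erase (0 : Fin (n+2)), (z i) ^ 2 := by
          rw [Finset.mul_sum]
          apply Finset.sum_congr rfl
          intro i hi
          have hi0 : i ≠ 0 := (Finset.mem_erase.1 hi).1
          rw [hφ c i, if_neg hi0]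
          ring
        rw [this, hzsum]
        have hc2 : c ^ 2 < 1 := by nlinarith [hc.1, hc.2]
        have h2 : c ^ 2 * (r ^ s) ^ 2 < 1 * (r ^ s) ^ 2 :=
          mul_lt_mul_of_pos_right hc2 (by positivity)
        linarith
    · -- not in stem
      intro hmem
      have := hmem.2.2
      rw [hzsum] at this
      exact lt_irrefl _ this
  -- distance bound
  have hdist : dist x z = |x 1 - b| := by
    rw [EuclideanSpace.dist_eq]
    have : ∀ j : Fin (n+2), dist (x j) (z j) ^ 2 = if j = 1 then (x 1 - b)^2 else 0 := by
      intro j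
      by_cases hj : j = 1
      · subst hj; rw [hz1, if_pos rfl, Real.dist_eq, sq_abs]
      · rw [if_neg hj, hzapp j, if_neg hj]; simp
    rw [Finset.sum_congr rfl fun j _ => this j, Finset.sum_ite_eq' Finset.univ 1
      (fun _ => (x 1 - b)^2), if_pos (Finset.mem_univ _), Real.sqrt_sq_eq_abs]
  calc infDist x (frontier (stem n r s)) ≤ dist x z := infDist_le_dist_of_mem hzfront
    _ = |x 1 - b| := hdist
    _ ≤ |x 1| + |b| := abs_sub _ _
    _ ≤ r ^ s + r ^ s := by
        have : |b| = b := abs_of_nonneg hbnonneg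
        rw [this]; exact add_le_add hx1 hble
    _ = 2 * r ^ s := by ring


lemma volume_stem_le {n : ℕ} {r s : ℝ} (hr : 0 < r) :
    volume (stem n r s) ≤ ENNReal.ofReal r * ENNReal.ofReal (2 * r ^ s) ^ (n + 1) := by
  have hrs : 0 < r ^ s := Real.rpow_pos_of_pos hr s
  set t : Fin (n+2) → Set ℝ :=
    fun i => if i = 0 then Set.Ioo 0 r else Set.Ioo (-(r ^ s)) (r ^ s) with ht
  have hsub : stem n r s ⊆ (MeasurableEquiv.toLp 2 (Fin (n+2) → ℝ)).symm ⁻¹' Set.univ.pi t := by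
    intro x hx
    obtain ⟨hx0, hxr, hxs⟩ := hx
    intro i _
    have happ : (MeasurableEquiv.toLp 2 (Fin (n+2) → ℝ)).symm x i = x i := by
      rfl
    rw [happ]
    by_cases hi : i = 0
    · subst hi
      simpa [ht] using ⟨hx0, hxr⟩
    · have hmem : i ∈ Finset.univ.erase (0 : Fin (n+2)) :=
        Finset.mem_erase.2 ⟨hi, Finset.mem_univ _⟩
      have hle : (x i) ^ 2 ≤ ∑ j ∈ Finset.univ.erase (0 : Fin (n+2)), (x j) ^ 2 :=
        Finset.single_le_sum (f := fun j => ((x j : ℝ)) ^ 2)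
          (fun j _ => sq_nonneg _) hmem
      have habs : |x i| < r ^ s := by
        have h2 : (x i) ^ 2 < (r ^ s) ^ 2 := lt_of_le_of_lt hle hxs
        rw [← Real.sqrt_sq_eq_abs, ← Real.sqrt_sq hrs.le]
        exact Real.sqrt_lt_sqrt (sq_nonneg _) h2
      simpa [ht, hi] using abs_lt.1 habs
  calc volume (stem n r s) ≤
      volume ((MeasurableEquiv.toLp 2 (Fin (n+2) → ℝ)).symm ⁻¹' Set.univ.pi t) :=
        measure_mono hsub
    _ = volume (Set.univ.pi t) :=
        (EuclideanSpace.volume_preserving_symm_measurableEquiv_toLp (Fin (n+2))).measure_preimage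
          ((MeasurableSet.univ_pi fun i => by
            rw [ht]; by_cases hi : i = 0 <;> simp [hi, measurableSet_Ioo]).nullMeasurableSet)
    _ = ∏ i : Fin (n+2), volume (t i) := volume_pi_pi t
    _ = volume (t 0) * ∏ i ∈ Finset.univ.erase (0 : Fin (n+2)), volume (t i) :=
        (Finset.mul_prod_erase _ _ (Finset.mem_univ _)).symm
    _ ≤ ENNReal.ofReal r * ENNReal.ofReal (2 * r ^ s) ^ (n + 1) := by
        have h0 : volume (t 0) = ENNReal.ofReal r := by
          simp [ht, Real.volume_Ioo]
        have hrest : ∏ i ∈ Finset.univ.erase (0 : Fin (n+2)), volume (t i) =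
            ENNReal.ofReal (2 * r ^ s) ^ (n + 1) := by
          have hconst : ∀ i ∈ Finset.univ.erase (0 : Fin (n+2)),
              volume (t i) = ENNReal.ofReal (2 * r ^ s) := by
            intro i hi
            have hi0 : i ≠ 0 := (Finset.mem_erase.1 hi).1
            simp only [ht, if_neg hi0, Real.volume_Ioo]
            congr 1
            ring
          rw [Finset.prod_congr rfl hconst, Finset.prod_const,
            Finset.card_erase_of_mem (Finset.mem_univ _), Finset.card_univ,
            Fintype.card_fin]
          congr 1
        rw [h0, hrest]


/-- For the linear profile `u(x) = x₁/r` on the stem `P` of height `r` and radius `r^s`,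
the localized fractional `(p,δ)`-energy is bounded by `C r^{s(n−pδ)+(s−1)(p−1)}`,
with `C` depending only on `n, p, δ, τ`. -/
theorem stmt_10 (n : ℕ) (p δ τ s : ℝ) (hp : 1 ≤ p) (hδ : δ ∈ Set.Ioo (0:ℝ) 1)
    (hτ : 0 < τ) (hs : 1 ≤ s) :
    ∃ C : ℝ, 0 < C ∧ ∀ r : ℝ, 0 < r → r < 1 →
      (∫⁻ x in stem n r s,
          ∫⁻ y in stem n r s ∩ ball x (τ * infDist x (frontier (stem n r s))),
            ENNReal.ofReal
              (|x 0 / r - y 0 / r| ^ p / dist x y ^ (((n : ℝ) + 2) + p * δ))) ≤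
        ENNReal.ofReal
          (C * r ^ (s * (((n : ℝ) + 2) - p * δ) + (s - 1) * (p - 1))) := by
  obtain ⟨hδ0, hδ1⟩ := hδ
  have hp0 : (0:ℝ) < p := lt_of_lt_of_le one_pos hp
  have hα : 0 < p * (1 - δ) := by nlinarith
  obtain ⟨c₁, hc₁, hball⟩ := ball_rpow_bound (n+2) (by omega) hα
  refine ⟨c₁ * (2*τ) ^ (p*(1-δ)) * 2 ^ (n+1) + 1, by positivity, fun r hr hr1 => ?_⟩
  have hrs : 0 < r ^ s := Real.rpow_pos_of_pos hr s
  have hcast : ((n+2 : ℕ) : ℝ) = (n : ℝ) + 2 := by push_cast; ring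
  -- pointwise bound
  have hpt : ∀ x y : EuclideanSpace ℝ (Fin (n+2)),
      ENNReal.ofReal (|x 0 / r - y 0 / r| ^ p / dist x y ^ (((n:ℝ) + 2) + p * δ)) ≤
      ENNReal.ofReal (r ^ (-p) * dist x y ^ (p*(1-δ) - ((n+2:ℕ):ℝ))) := by
    intro x y
    rcases eq_or_lt_of_le (dist_nonneg (x := x) (y := y)) with h0 | hpos
    · have hxy : x = y := dist_eq_zero.1 h0.symm
      subst hxy
      simp [Real.zero_rpow hp0.ne']
    · apply ENNReal.ofReal_le_ofReal
      have hden : 0 < dist x y ^ (((n:ℝ) + 2) + p * δ) := Real.rpow_pos_of_pos hpos _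
      have hnum : |x 0 / r - y 0 / r| ^ p ≤ (dist x y / r) ^ p := by
        apply Real.rpow_le_rpow (abs_nonneg _) _ hp0.le
        rw [div_sub_div_same, abs_div, abs_of_pos hr]
        exact div_le_div_of_nonneg_right (abs_coord_le_dist x y 0) hr.le
      have h1 : dist x y ^ p / dist x y ^ (((n:ℝ) + 2) + p * δ)
          = dist x y ^ (p*(1-δ) - ((n+2:ℕ):ℝ)) := by
        rw [← Real.rpow_sub hpos]
        congr 1
        rw [hcast]
        ring
      have heq : (dist x y / r) ^ p / dist x y ^ (((n:ℝ) + 2) + p * δ)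
          = r ^ (-p) * dist x y ^ (p*(1-δ) - ((n+2:ℕ):ℝ)) := by
        rw [Real.div_rpow dist_nonneg hr.le, Real.rpow_neg hr.le]
        rw [← h1]
        ring
      calc |x 0 / r - y 0 / r| ^ p / dist x y ^ (((n:ℝ) + 2) + p * δ)
          ≤ (dist x y / r) ^ p / dist x y ^ (((n:ℝ) + 2) + p * δ) :=
            div_le_div_of_nonneg_right hnum hden.le
        _ = _ := heq
  -- inner bound
  set K : ℝ := r ^ (-p) * (c₁ * (τ*(2*r^s)) ^ (p*(1-δ))) with hK
  have hK0 : 0 ≤ K := by positivity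
  have hinner : ∀ x ∈ stem n r s,
      (∫⁻ y in stem n r s ∩ ball x (τ * infDist x (frontier (stem n r s))),
        ENNReal.ofReal (|x 0 / r - y 0 / r| ^ p / dist x y ^ (((n:ℝ) + 2) + p * δ)))
      ≤ ENNReal.ofReal K := by
    intro x hx
    have hRx0 : 0 ≤ τ * infDist x (frontier (stem n r s)) :=
      mul_nonneg hτ.le infDist_nonneg
    have hRxle : τ * infDist x (frontier (stem n r s)) ≤ τ * (2*r^s) :=
      mul_le_mul_of_nonneg_left (infDist_frontier_stem_le hr hx) hτ.le
    calc (∫⁻ y in stem n r s ∩ ball x (τ * infDist x (frontier (stem n r s))),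
          ENNReal.ofReal (|x 0 / r - y 0 / r| ^ p / dist x y ^ (((n:ℝ) + 2) + p * δ)))
        ≤ ∫⁻ y in ball x (τ * infDist x (frontier (stem n r s))),
            ENNReal.ofReal (|x 0 / r - y 0 / r| ^ p / dist x y ^ (((n:ℝ) + 2) + p * δ)) :=
          lintegral_mono_set Set.inter_subset_right
      _ ≤ ∫⁻ y in ball x (τ * infDist x (frontier (stem n r s))),
            ENNReal.ofReal (r ^ (-p) * dist x y ^ (p*(1-δ) - ((n+2:ℕ):ℝ))) :=
          lintegral_mono fun y => hpt x y
      _ = ENNReal.ofReal (r ^ (-p)) *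
            ∫⁻ y in ball x (τ * infDist x (frontier (stem n r s))),
              ENNReal.ofReal (dist x y ^ (p*(1-δ) - ((n+2:ℕ):ℝ))) := by
          simp_rw [ENNReal.ofReal_mul (Real.rpow_nonneg hr.le (-p))]
          rw [lintegral_const_mul' _ _ ENNReal.ofReal_ne_top]
      _ ≤ ENNReal.ofReal (r ^ (-p)) *
            ENNReal.ofReal (c₁ * (τ * infDist x (frontier (stem n r s))) ^ (p*(1-δ))) :=
          mul_le_mul_right (hball x _ hRx0) _
      _ ≤ ENNReal.ofReal (r ^ (-p)) * ENNReal.ofReal (c₁ * (τ*(2*r^s)) ^ (p*(1-δ))) := by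
          apply mul_le_mul_right
          apply ENNReal.ofReal_le_ofReal
          have := Real.rpow_le_rpow hRx0 hRxle hα.le
          nlinarith
      _ = ENNReal.ofReal K :=
          (ENNReal.ofReal_mul (Real.rpow_nonneg hr.le (-p))).symm
  -- real algebra
  have e1 : (τ*(2*r^s)) ^ (p*(1-δ)) = (2*τ) ^ (p*(1-δ)) * r ^ (s*(p*(1-δ))) := by
    rw [show τ*(2*r^s) = (2*τ)*r^s by ring,
      Real.mul_rpow (by positivity) (Real.rpow_nonneg hr.le s), ← Real.rpow_mul hr.le]
  have e2 : (2*r^s) ^ (n+1) = 2 ^ (n+1) * r ^ (s*((n+1:ℕ):ℝ)) := by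
    rw [mul_pow, ← Real.rpow_natCast (r^s) (n+1), ← Real.rpow_mul hr.le]
  have e3 : r ^ (-p) * r ^ (s*(p*(1-δ))) * (r * r ^ (s*((n+1:ℕ):ℝ)))
      = r ^ (s * (((n:ℝ) + 2) - p * δ) + (s - 1) * (p - 1)) := by
    rw [← Real.rpow_add hr, mul_comm r (r ^ (s*((n+1:ℕ):ℝ))),
      ← Real.rpow_add_one hr.ne', ← Real.rpow_add hr]
    congr 1
    push_cast
    ring
  have hfinal : K * (r * (2*r^s) ^ (n+1))
      ≤ (c₁ * (2*τ) ^ (p*(1-δ)) * 2 ^ (n+1) + 1) *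
        r ^ (s * (((n:ℝ) + 2) - p * δ) + (s - 1) * (p - 1)) := by
    have hexp : K * (r * (2*r^s) ^ (n+1))
        = (c₁ * (2*τ) ^ (p*(1-δ)) * 2 ^ (n+1)) *
          r ^ (s * (((n:ℝ) + 2) - p * δ) + (s - 1) * (p - 1)) := by
      rw [hK, e1, e2, ← e3]
      ring
    rw [hexp]
    apply mul_le_mul_of_nonneg_right _ (Real.rpow_nonneg hr.le _)
    nlinarith [Real.rpow_nonneg hr.le (s * (((n:ℝ) + 2) - p * δ) + (s - 1) * (p - 1))]
  -- assemble
  calc (∫⁻ x in stem n r s,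
        ∫⁻ y in stem n r s ∩ ball x (τ * infDist x (frontier (stem n r s))),
          ENNReal.ofReal (|x 0 / r - y 0 / r| ^ p / dist x y ^ (((n:ℝ) + 2) + p * δ)))
      ≤ ∫⁻ _ in stem n r s, ENNReal.ofReal K :=
        setLIntegral_mono measurable_const hinner
    _ = ENNReal.ofReal K * volume (stem n r s) := setLIntegral_const _ _
    _ ≤ ENNReal.ofReal K * (ENNReal.ofReal r * ENNReal.ofReal (2 * r ^ s) ^ (n + 1)) :=
        mul_le_mul_right (volume_stem_le hr) _
    _ = ENNReal.ofReal (K * (r * (2*r^s) ^ (n+1))) := by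
        rw [← ENNReal.ofReal_pow (by positivity), ← ENNReal.ofReal_mul hr.le,
          ← ENNReal.ofReal_mul hK0]
    _ ≤ ENNReal.ofReal
          ((c₁ * (2*τ) ^ (p*(1-δ)) * 2 ^ (n+1) + 1) *
            r ^ (s * (((n:ℝ) + 2) - p * δ) + (s - 1) * (p - 1))) :=
        ENNReal.ofReal_le_ofReal hfinal
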